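/- arXiv:2311.06738 — 6 statements merged into one kernel-verified Lean document; each statement's English description precedes it below -/
import Mathlib

section
/- Let λ > 0, α > 0, β > 0 and let f : ℝ → ℝ be integrable (f ∈ L¹(ℝ)) and bounded. Then the left tempered fractional integrals satisfy the semigroup property: for every x ∈ ℝ, I₊^{α,λ}(I₊^{β,λ} f)(x) = I₊^{α+β,λ} f(x). -/
open MeasureTheory

/-- Left tempered fractional integral
`I₊^{α,λ} f(x) = (1/Γ(α)) ∫_{-∞}^x (x−η)^{α−1} e^{−λ(x−η)} f(η) dη`. -/
noncomputable def leftTemperedIntegral (α lam : ℝ) (f : ℝ → ℝ) (x : ℝ) : ℝ :=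
  (1 / Real.Gamma α) * ∫ η in Set.Iic x, (x - η) ^ (α - 1) * Real.exp (-lam * (x - η)) * f η

open scoped Convolution
open ContinuousLinearMap

noncomputable def ltiKernel (γ lam : ℝ) : ℝ → ℝ :=
  (Set.Ioi (0:ℝ)).indicator fun t => t ^ (γ - 1) * Real.exp (-lam * t)

lemma ltiKernel_nonneg (γ lam : ℝ) (t : ℝ) : 0 ≤ ltiKernel γ lam t := by
  unfold ltiKernel
  apply Set.indicator_nonneg
  intro x hx
  exact mul_nonneg (Real.rpow_nonneg (le_of_lt hx) _) (Real.exp_pos _).le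

lemma ltiKernel_norm (γ lam : ℝ) : (fun t => ‖ltiKernel γ lam t‖) = ltiKernel γ lam := by
  funext t; exact Real.norm_of_nonneg (ltiKernel_nonneg γ lam t)

lemma ltiKernel_norm_apply (γ lam t : ℝ) : ‖ltiKernel γ lam t‖ = ltiKernel γ lam t :=
  Real.norm_of_nonneg (ltiKernel_nonneg γ lam t)

lemma ltiKernel_measurable (γ lam : ℝ) : Measurable (ltiKernel γ lam) := by
  unfold ltiKernel
  apply Measurable.indicator _ measurableSet_Ioi
  fun_prop

lemma ltiKernel_integrable {γ lam : ℝ} (hγ : 0 < γ) (hlam : 0 < lam) :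
    Integrable (ltiKernel γ lam) := by
  unfold ltiKernel
  rw [integrable_indicator_iff measurableSet_Ioi]
  have := integrableOn_rpow_mul_exp_neg_mul_rpow (p := 1) (s := γ - 1) (b := lam)
    (by linarith) one_pos hlam
  simpa [Real.rpow_one] using this

lemma real_betaIntegral_scaled {s t a : ℝ} (hs : 0 < s) (ht : 0 < t) (ha : 0 < a) :
    ∫ u in (0:ℝ)..a, u ^ (s - 1) * (a - u) ^ (t - 1) =
      a ^ (s + t - 1) * (Real.Gamma s * Real.Gamma t / Real.Gamma (s + t)) := by
  have hGR : Real.Gamma (s + t) ≠ 0 := (Real.Gamma_pos_of_pos (by linarith)).ne'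
  have hG : Complex.Gamma ((s : ℂ) + t) ≠ 0 := by
    rw [show ((s:ℂ) + t) = ((s + t : ℝ) : ℂ) by push_cast; ring, Complex.Gamma_ofReal]
    exact_mod_cast hGR
  have hbeta : Complex.betaIntegral s t =
      ((Real.Gamma s * Real.Gamma t / Real.Gamma (s + t) : ℝ) : ℂ) := by
    have h := Complex.Gamma_mul_Gamma_eq_betaIntegral
      (s := (s:ℂ)) (t := (t:ℂ)) (by simpa using hs) (by simpa using ht)
    rw [show ((s:ℂ) + t) = ((s + t : ℝ) : ℂ) by push_cast; ring, Complex.Gamma_ofReal,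
      Complex.Gamma_ofReal, Complex.Gamma_ofReal] at h
    have hG' : ((Real.Gamma (s + t) : ℝ) : ℂ) ≠ 0 := by exact_mod_cast hGR
    rw [Complex.ofReal_div, Complex.ofReal_mul, eq_div_iff hG', mul_comm]
    exact h.symm
  have hscaled := Complex.betaIntegral_scaled (s:ℂ) (t:ℂ) ha
  have hLHS : (∫ x in (0:ℝ)..a, (x : ℂ) ^ ((s:ℂ) - 1) * ((a : ℂ) - x) ^ ((t:ℂ) - 1)) =
      ((∫ u in (0:ℝ)..a, u ^ (s - 1) * (a - u) ^ (t - 1) : ℝ) : ℂ) := by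
    rw [← intervalIntegral.integral_ofReal]
    rw [intervalIntegral.integral_of_le ha.le, intervalIntegral.integral_of_le ha.le]
    refine setIntegral_congr_fun measurableSet_Ioc fun x hx => ?_
    push_cast
    rw [Complex.ofReal_cpow hx.1.le, Complex.ofReal_cpow (by linarith [hx.2] : (0:ℝ) ≤ a - x)]
    push_cast
    ring
  rw [hLHS, hbeta] at hscaled
  have hRHS : ((a : ℂ)) ^ ((s:ℂ) + t - 1) = ((a ^ (s + t - 1) : ℝ) : ℂ) := by
    rw [Complex.ofReal_cpow ha.le]
    push_cast
    ring_nf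
  rw [hRHS, ← Complex.ofReal_mul] at hscaled
  exact_mod_cast hscaled

lemma beta_intervalIntegrable {s t a : ℝ} (hs : 0 < s) (ht : 0 < t) (ha : 0 < a) :
    IntervalIntegrable (fun u : ℝ => u ^ (s - 1) * (a - u) ^ (t - 1)) volume 0 a := by
  have h1 : IntervalIntegrable (fun u : ℝ => u ^ (s - 1) * (a - u) ^ (t - 1)) volume 0 (a/2) := by
    apply IntervalIntegrable.mul_continuousOn
    · exact intervalIntegral.intervalIntegrable_rpow' (by linarith)
    · apply ContinuousOn.rpow_const (continuous_const.sub continuous_id).continuousOn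
      intro u hu
      rw [Set.uIcc_of_le (by linarith)] at hu
      left
      have := hu.2
      simp only [Pi.sub_apply, id_eq] at this ⊢
      intro h
      nlinarith
  have h2 : IntervalIntegrable (fun u : ℝ => u ^ (s - 1) * (a - u) ^ (t - 1)) volume (a/2) a := by
    apply IntervalIntegrable.continuousOn_mul
    · have h := (intervalIntegral.intervalIntegrable_rpow' (a := 0) (b := a/2) (r := t-1)
        (by linarith)).comp_sub_left a
      have h2 := h.symm
      rw [show a - 0 = a by ring, show a - a/2 = a/2 by ring] at h2
      exact h2
    · apply ContinuousOn.rpow_const continuous_id.continuousOn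
      intro u hu
      rw [Set.uIcc_of_le (by linarith)] at hu
      left
      simp only [id_eq]
      have := hu.1
      intro h
      nlinarith
  exact h1.trans h2

lemma ltiKernel_conv_integrand_eq (α β lam x : ℝ) :
    (fun u => ltiKernel β lam u * ltiKernel α lam (x - u)) =
      (Set.Ioo 0 x).indicator
        (fun u => Real.exp (-lam * x) * (u ^ (β - 1) * (x - u) ^ (α - 1))) := by
  funext u
  by_cases hu : u ∈ Set.Ioo 0 x
  · rw [Set.indicator_of_mem hu]
    unfold ltiKernel
    rw [Set.indicator_of_mem (Set.mem_Ioi.2 hu.1),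
      Set.indicator_of_mem (Set.mem_Ioi.2 (by have := hu.2; linarith : (0:ℝ) < x - u))]
    rw [show (-lam * x) = (-lam * u) + (-lam * (x - u)) by ring, Real.exp_add]
    ring
  · rw [Set.indicator_of_notMem hu]
    rw [Set.mem_Ioo, not_and_or, not_lt, not_lt] at hu
    rcases hu with h | h
    · unfold ltiKernel
      rw [Set.indicator_of_notMem (by simpa using h)]
      ring
    · unfold ltiKernel
      rw [Set.indicator_of_notMem (show x - u ∉ Set.Ioi (0:ℝ) by simp; linarith)]
      ring

lemma ltiKernel_convExists {α β lam : ℝ} (hα : 0 < α) (hβ : 0 < β) (x : ℝ) :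
    Integrable (fun u => ltiKernel β lam u * ltiKernel α lam (x - u)) := by
  rw [ltiKernel_conv_integrand_eq]
  rw [integrable_indicator_iff measurableSet_Ioo]
  by_cases hx : 0 < x
  · exact (((beta_intervalIntegrable hβ hα hx).1.mono_set
      Set.Ioo_subset_Ioc_self).const_mul _)
  · rw [Set.Ioo_eq_empty (by simpa using hx)]
    exact integrableOn_empty

lemma ltiKernel_conv_eq {α β lam : ℝ} (hα : 0 < α) (hβ : 0 < β) (x : ℝ) :
    ∫ u, ltiKernel β lam u * ltiKernel α lam (x - u) =
      (Real.Gamma β * Real.Gamma α / Real.Gamma (α + β)) * ltiKernel (α + β) lam x := by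
  rw [ltiKernel_conv_integrand_eq, integral_indicator measurableSet_Ioo]
  by_cases hx : 0 < x
  · rw [MeasureTheory.integral_const_mul]
    have h1 : ∫ u in Set.Ioo 0 x, u ^ (β - 1) * (x - u) ^ (α - 1) =
        ∫ u in (0:ℝ)..x, u ^ (β - 1) * (x - u) ^ (α - 1) := by
      rw [intervalIntegral.integral_of_le hx.le, integral_Ioc_eq_integral_Ioo]
    rw [h1, real_betaIntegral_scaled hβ hα hx]
    unfold ltiKernel
    rw [Set.indicator_of_mem (Set.mem_Ioi.2 hx)]
    rw [show β + α = α + β from add_comm β α]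
    ring
  · rw [Set.Ioo_eq_empty (by simpa using hx)]
    simp only [Measure.restrict_empty, integral_zero_measure]
    unfold ltiKernel
    rw [Set.indicator_of_notMem (by simpa using hx)]
    ring

lemma leftTempered_eq_conv (γ lam : ℝ) (g : ℝ → ℝ) (x : ℝ) :
    leftTemperedIntegral γ lam g x =
      (1 / Real.Gamma γ) * ∫ t, g t * ltiKernel γ lam (x - t) := by
  unfold leftTemperedIntegral
  congr 1
  have h : (fun t => g t * ltiKernel γ lam (x - t)) =
      (Set.Iio x).indicator (fun η => (x - η) ^ (γ - 1) * Real.exp (-lam * (x - η)) * g η) := by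
    funext t
    by_cases ht : t ∈ Set.Iio x
    · rw [Set.indicator_of_mem ht]
      unfold ltiKernel
      rw [Set.indicator_of_mem (Set.mem_Ioi.2 (by simp only [Set.mem_Iio] at ht; linarith))]
      ring
    · rw [Set.indicator_of_notMem ht]
      unfold ltiKernel
      rw [Set.indicator_of_notMem (show x - t ∉ Set.Ioi (0:ℝ) by
        simp only [Set.mem_Iio, not_lt] at ht; simp; linarith)]
      ring
  rw [h, integral_indicator measurableSet_Iio]
  exact (setIntegral_congr_set Iio_ae_eq_Iic).symm

lemma convExists_bdd {g : ℝ → ℝ} (hgm : AEStronglyMeasurable g volume) {C : ℝ}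
    (hgb : ∀ y, |g y| ≤ C) {k : ℝ → ℝ} (hk : Integrable k) (hkm : Measurable k) (x : ℝ) :
    Integrable (fun t => g t * k (x - t)) := by
  have hki : Integrable (fun t => k (x - t)) := hk.comp_sub_left x
  refine (hki.norm.const_mul C).mono' ?_ ?_
  · exact hgm.mul (hkm.comp (measurable_const.sub measurable_id)).aestronglyMeasurable
  · filter_upwards with t
    rw [norm_mul]
    exact mul_le_mul_of_nonneg_right (by simpa [Real.norm_eq_abs] using hgb t) (norm_nonneg _)

theorem left_tempered_integral_semigroup (lam α β : ℝ) (hlam : 0 < lam) (hα : 0 < α)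
    (hβ : 0 < β) (f : ℝ → ℝ) (hf : Integrable f) (hfb : ∃ C, ∀ x, |f x| ≤ C) :
    ∀ x : ℝ, leftTemperedIntegral α lam (leftTemperedIntegral β lam f) x =
      leftTemperedIntegral (α + β) lam f x := by
  intro x
  obtain ⟨C, hC⟩ := hfb
  have hΓα := (Real.Gamma_pos_of_pos hα).ne'
  have hΓβ := (Real.Gamma_pos_of_pos hβ).ne'
  have hΓαβ := (Real.Gamma_pos_of_pos (by linarith : (0:ℝ) < α + β)).ne'
  have hkβi := ltiKernel_integrable hβ hlam
  have hkαm := ltiKernel_measurable α lam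
  have hkβm := ltiKernel_measurable β lam
  have hkαβm := ltiKernel_measurable (α + β) lam
  have hkαβi := ltiKernel_integrable (by linarith : (0:ℝ) < α + β) hlam
  set c : ℝ := Real.Gamma β * Real.Gamma α / Real.Gamma (α + β) with hc
  -- associativity of convolution
  have hfg : ∀ y : ℝ, ConvolutionExistsAt f (ltiKernel β lam) y (mul ℝ ℝ) volume := by
    intro y
    simp only [ConvolutionExistsAt, mul_apply']
    exact convExists_bdd hf.1 hC hkβi hkβm y
  have hgk : ∀ y : ℝ, ConvolutionExistsAt (fun t => ‖ltiKernel β lam t‖)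
      (fun t => ‖ltiKernel α lam t‖) y (mul ℝ ℝ) volume := by
    intro y
    simp only [ConvolutionExistsAt, mul_apply', ltiKernel_norm_apply]
    exact ltiKernel_convExists hα hβ y
  have hconvk : ∀ y : ℝ, (ltiKernel β lam ⋆[mul ℝ ℝ, volume] ltiKernel α lam) y =
      c * ltiKernel (α + β) lam y := by
    intro y
    rw [convolution_def]
    simp only [mul_apply']
    exact ltiKernel_conv_eq hα hβ y
  have hfgk : ConvolutionExistsAt (fun t => ‖f t‖)
      ((fun t => ‖ltiKernel β lam t‖) ⋆[mul ℝ ℝ, volume] fun t => ‖ltiKernel α lam t‖) x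
      (mul ℝ ℝ) volume := by
    simp only [ConvolutionExistsAt, mul_apply', ltiKernel_norm]
    have hint : Integrable (fun t => ‖f t‖ * ((fun u => c * ltiKernel (α + β) lam u) (x - t))) :=
      convExists_bdd hf.1.norm (fun y => by simpa using hC y)
        (hkαβi.const_mul c) (hkαβm.const_mul c) x
    refine hint.congr (Filter.Eventually.of_forall fun t => ?_)
    dsimp only
    rw [hconvk]
  have hassoc := convolution_assoc (mul ℝ ℝ) (mul ℝ ℝ) (mul ℝ ℝ) (mul ℝ ℝ)
    (fun a b c => mul_assoc a b c) (x₀ := x) (f := f) (g := ltiKernel β lam)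
    (k := ltiKernel α lam) (ν := volume) (μ := volume) hf.1 hkβm.aestronglyMeasurable
    hkαm.aestronglyMeasurable (Filter.Eventually.of_forall hfg)
    (Filter.Eventually.of_forall hgk) hfgk
  -- rewrite both sides
  rw [leftTempered_eq_conv, leftTempered_eq_conv]
  have hL : (∫ t, leftTemperedIntegral β lam f t * ltiKernel α lam (x - t)) =
      (1 / Real.Gamma β) * ((f ⋆[mul ℝ ℝ, volume] ltiKernel β lam)
        ⋆[mul ℝ ℝ, volume] ltiKernel α lam) x := by
    rw [convolution_def]
    simp only [mul_apply', convolution_def]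
    rw [← MeasureTheory.integral_const_mul]
    congr 1
    funext t
    rw [leftTempered_eq_conv]
    ring
  rw [hL, hassoc]
  have hR : (f ⋆[mul ℝ ℝ, volume] (ltiKernel β lam ⋆[mul ℝ ℝ, volume] ltiKernel α lam)) x =
      c * ∫ t, f t * ltiKernel (α + β) lam (x - t) := by
    rw [convolution_def]
    simp only [mul_apply']
    rw [← MeasureTheory.integral_const_mul]
    congr 1
    funext t
    rw [hconvk (x - t)]
    ring
  rw [hR, hc]
  field_simp
end

section
/- Let λ > 0 and α > 0 and let f ∈ L¹(ℝ). Then for every ω ∈ ℝ, the Fourier transform of the left tempered fractional integral of f satisfies F[I₊^{α,λ} f](ω) = (λ + iω)^{−α} F[f](ω), where (λ + iω)^{−α} is the principal branch complex power. -/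
open MeasureTheory

open Set Complex Filter

lemma rexp_kernel_integrable {α b : ℝ} (hα : 0 < α) (hb : 0 < b) :
    IntegrableOn (fun t : ℝ => t ^ (α - 1) * Real.exp (-b * t)) (Set.Ioi 0) := by
  have := integrableOn_rpow_mul_exp_neg_mul_rpow (s := α - 1) (p := 1) (b := b)
    (by linarith) zero_lt_one hb
  simpa [Real.rpow_one] using this

lemma claplace_integrable {α : ℝ} (hα : 0 < α) {z : ℂ} (hz : 0 < z.re) :
    IntegrableOn (fun t : ℝ => (t : ℂ) ^ ((α : ℂ) - 1) * Complex.exp (-z * t)) (Set.Ioi 0) := by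
  apply Integrable.mono' (rexp_kernel_integrable hα hz)
  · apply AEStronglyMeasurable.mul
    · exact (Complex.measurable_ofReal.pow_const _).aestronglyMeasurable
    · exact (Complex.continuous_exp.comp (continuous_const.mul Complex.continuous_ofReal)).aestronglyMeasurable
  · filter_upwards [ae_restrict_mem measurableSet_Ioi] with t ht
    rw [norm_mul, Complex.norm_exp,
      Complex.norm_cpow_eq_rpow_re_of_pos ht]
    simp only [Complex.sub_re, Complex.ofReal_re, Complex.one_re, Complex.neg_re,
      Complex.mul_re, Complex.ofReal_im, mul_zero, sub_zero]
    exact le_of_eq (by ring_nf)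

lemma claplace_real {α : ℝ} (hα : 0 < α) {r : ℝ} (hr : 0 < r) :
    ∫ t in Set.Ioi (0:ℝ), (t : ℂ) ^ ((α : ℂ) - 1) * Complex.exp (-(r:ℂ) * t)
      = Complex.Gamma α * (r:ℂ) ^ (-(α:ℂ)) := by
  have h := Complex.integral_cpow_mul_exp_neg_mul_Ioi (a := (α:ℂ)) (r := r)
    (by simpa using hα) hr
  simp_rw [neg_mul] at h ⊢
  rw [h, one_div, Complex.inv_cpow _ _ (by
    rw [Complex.arg_ofReal_of_nonneg hr.le]; exact Real.pi_ne_zero.symm),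
    ← Complex.cpow_neg, mul_comm]

lemma claplace_hasDerivAt {α : ℝ} (hα : 0 < α) {z₀ : ℂ} (hz₀ : 0 < z₀.re) :
    DifferentiableAt ℂ
      (fun z : ℂ => ∫ t in Set.Ioi (0:ℝ), (t : ℂ) ^ ((α : ℂ) - 1) * Complex.exp (-z * t)) z₀ := by
  set ε := z₀.re / 2 with hε
  have hεpos : 0 < ε := by positivity
  have key := hasDerivAt_integral_of_dominated_loc_of_deriv_le (μ := volume.restrict (Set.Ioi 0))
    (F := fun (z : ℂ) (t : ℝ) => (t : ℂ) ^ ((α : ℂ) - 1) * Complex.exp (-z * t))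
    (F' := fun (z : ℂ) (t : ℝ) => (t : ℂ) ^ ((α : ℂ) - 1) * (-t * Complex.exp (-z * t)))
    (x₀ := z₀) (bound := fun t : ℝ => t ^ α * Real.exp (-ε * t)) (Metric.ball_mem_nhds z₀ hεpos)
    ?_ ((claplace_integrable hα hz₀)) ?_ ?_ ?_ ?_
  · exact key.2.differentiableAt
  · filter_upwards with z
    apply AEStronglyMeasurable.mul
    · exact (Complex.measurable_ofReal.pow_const _).aestronglyMeasurable
    · exact (Complex.continuous_exp.comp
        (continuous_const.mul Complex.continuous_ofReal)).aestronglyMeasurable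
  · apply AEStronglyMeasurable.mul
    · exact (Complex.measurable_ofReal.pow_const _).aestronglyMeasurable
    · exact ((Complex.continuous_ofReal.neg).mul (Complex.continuous_exp.comp
        (continuous_const.mul Complex.continuous_ofReal))).aestronglyMeasurable
  · filter_upwards [ae_restrict_mem measurableSet_Ioi] with t ht z hz
    have hzre : ε ≤ z.re := by
      have h1 : |z.re - z₀.re| ≤ dist z z₀ := by
        rw [Complex.dist_eq]
        simpa using Complex.abs_re_le_norm (z - z₀)
      rw [Metric.mem_ball] at hz
      have := abs_le.1 h1
      linarith [this.1]
    rw [norm_mul, norm_mul,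
      Complex.norm_exp, Complex.norm_cpow_eq_rpow_re_of_pos ht, norm_neg, Complex.norm_real, Real.norm_eq_abs,
      abs_of_pos ht]
    have h2 : t ^ ((α:ℂ) - 1).re * (t * Real.exp ((-z * t).re)) = t ^ α * Real.exp ((-z * t).re) := by
      rw [← mul_assoc]
      congr 1
      rw [show ((α:ℂ) - 1).re = α - 1 by simp, ← Real.rpow_add_one (ne_of_gt ht)]
      norm_num
    rw [h2]
    gcongr
    · exact Real.rpow_nonneg ht.le _
    · simp only [Complex.neg_re, Complex.mul_re, Complex.ofReal_re, Complex.ofReal_im, mul_zero,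
        sub_zero, neg_mul]
      nlinarith [mul_le_mul_of_nonneg_right hzre (le_of_lt (Set.mem_Ioi.mp ht))]
  · have := rexp_kernel_integrable (by linarith : (0:ℝ) < α + 1) hεpos
    simpa [IntegrableOn] using this
  · filter_upwards [ae_restrict_mem measurableSet_Ioi] with t ht z hz
    have h1 : HasDerivAt (fun z : ℂ => Complex.exp (-z * t)) (-t * Complex.exp (-z * t)) z := by
      have h0 : HasDerivAt (fun z : ℂ => -z * (t:ℂ)) (-t) z := by
        simpa using ((hasDerivAt_id z).neg.mul_const (t:ℂ))
      simpa [mul_comm] using h0.cexp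
    exact (h1.const_mul _)

lemma claplace_eq {α : ℝ} (hα : 0 < α) {z : ℂ} (hz : 0 < z.re) :
    ∫ t in Set.Ioi (0:ℝ), (t : ℂ) ^ ((α : ℂ) - 1) * Complex.exp (-z * t)
      = Complex.Gamma α * z ^ (-(α:ℂ)) := by
  set L : ℂ → ℂ := fun z => ∫ t in Set.Ioi (0:ℝ), (t : ℂ) ^ ((α : ℂ) - 1) * Complex.exp (-z * t)
  set R : ℂ → ℂ := fun z => Complex.Gamma α * z ^ (-(α:ℂ))
  set U : Set ℂ := {z | 0 < z.re}
  have hUopen : IsOpen U := isOpen_lt continuous_const Complex.continuous_re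
  have hLa : AnalyticOnNhd ℂ L U :=
    DifferentiableOn.analyticOnNhd
      (fun w hw => (claplace_hasDerivAt hα hw).differentiableWithinAt) hUopen
  have hRa : AnalyticOnNhd ℂ R U := by
    apply DifferentiableOn.analyticOnNhd ?_ hUopen
    intro w hw
    exact ((differentiableAt_const _).mul
      ((differentiableAt_id.cpow (differentiableAt_const _) (Or.inl hw)))).differentiableWithinAt
  have h1 : (1:ℂ) ∈ U := by simp [U]
  have hfreq : ∃ᶠ w in nhdsWithin (1:ℂ) {(1:ℂ)}ᶜ, L w = R w := by
    have htt : Filter.Tendsto (fun n : ℕ => (1 + ((n:ℝ)+1)⁻¹ : ℂ)) Filter.atTop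
        (nhdsWithin (1:ℂ) {(1:ℂ)}ᶜ) := by
      apply tendsto_nhdsWithin_of_tendsto_nhds_of_eventually_within
      · have hre : Filter.Tendsto (fun n : ℕ => ((n:ℝ)+1)⁻¹) Filter.atTop (nhds 0) :=
          tendsto_one_div_add_atTop_nhds_zero_nat.congr (by intro n; simp [one_div])
        have h2 := (Complex.continuous_ofReal.tendsto 0).comp hre
        simpa using (tendsto_const_nhds (x := (1:ℂ))).add h2
      · filter_upwards with n
        simp only [Set.mem_compl_iff, Set.mem_singleton_iff]
        intro h
        have hc : ((((n:ℝ)+1)⁻¹ : ℝ) : ℂ) = 0 := add_eq_left.mp h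
        rw [Complex.ofReal_eq_zero] at hc
        have hpos : (0:ℝ) < ((n:ℝ)+1)⁻¹ := by positivity
        rw [hc] at hpos
        exact lt_irrefl _ hpos
    apply htt.frequently
    apply Filter.Frequently.of_forall
    intro n
    have hr : (0:ℝ) < 1 + ((n:ℝ)+1)⁻¹ := by positivity
    have := claplace_real hα hr
    simp only [L, R]
    push_cast at this ⊢
    exact this
  have := hLa.eqOn_of_preconnected_of_frequently_eq hRa
    ((convex_halfSpace_re_gt 0).isPreconnected) h1 hfreq
  exact this hz

noncomputable def tker (α lam : ℝ) : ℝ → ℝ :=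
  Set.indicator (Set.Ioi 0) (fun t => t ^ (α - 1) * Real.exp (-lam * t))

lemma tker_integrable {α lam : ℝ} (hα : 0 < α) (hlam : 0 < lam) :
    Integrable (tker α lam) := by
  rw [tker, integrable_indicator_iff measurableSet_Ioi]
  exact rexp_kernel_integrable hα hlam

lemma leftTemperedIntegral_eq (α lam : ℝ) (f : ℝ → ℝ) (x : ℝ) :
    leftTemperedIntegral α lam f x = (1 / Real.Gamma α) * ∫ η, tker α lam (x - η) * f η := by
  rw [leftTemperedIntegral]
  congr 1
  have h1 : ∀ η : ℝ, tker α lam (x - η) * f η =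
      Set.indicator (Set.Iio x) (fun η => (x - η) ^ (α - 1) * Real.exp (-lam * (x - η)) * f η) η := by
    intro η
    by_cases h : η < x
    · rw [Set.indicator_of_mem (Set.mem_Iio.mpr h), tker, Set.indicator_of_mem (by simpa [Set.mem_Ioi] using sub_pos.mpr h)]
    · rw [Set.indicator_of_notMem (fun hh => h (Set.mem_Iio.mp hh)), tker,
        Set.indicator_of_notMem (by simpa [Set.mem_Ioi] using fun hh => h (sub_pos.mp hh)), zero_mul]
  rw [show (∫ η, tker α lam (x - η) * f η) = ∫ η, Set.indicator (Set.Iio x)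
      (fun η => (x - η) ^ (α - 1) * Real.exp (-lam * (x - η)) * f η) η from by simp_rw [h1],
    integral_indicator measurableSet_Iio]
  exact (setIntegral_congr_set Iio_ae_eq_Iic).symm

lemma conv_fourier {α lam : ℝ} (hα : 0 < α) (hlam : 0 < lam) {f : ℝ → ℝ}
    (hf : Integrable f) (ω : ℝ) :
    ∫ x : ℝ, (↑(∫ η, tker α lam (x - η) * f η) : ℂ) * Complex.exp (-Complex.I * ω * x)
      = (∫ t : ℝ, (tker α lam t : ℂ) * Complex.exp (-Complex.I * ω * t)) *
        ∫ x : ℝ, (f x : ℂ) * Complex.exp (-Complex.I * ω * x) := by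
  set e : ℝ → ℂ := fun x => Complex.exp (-Complex.I * ω * x) with he
  have henorm : ∀ x : ℝ, ‖e x‖ = 1 := by
    intro x
    simp [e, Complex.norm_exp, Complex.mul_re, Complex.mul_im]
  have hgi := tker_integrable hα hlam
  have hconv : Integrable (fun p : ℝ × ℝ => f p.2 * tker α lam (p.1 - p.2))
      (volume.prod volume) := by
    simpa using hf.convolution_integrand (ContinuousLinearMap.mul ℝ ℝ) hgi
  have hecont : Continuous fun p : ℝ × ℝ => e p.1 := by
    exact Complex.continuous_exp.comp
      ((continuous_const.mul Complex.continuous_ofReal).comp continuous_fst)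
  have hF : Integrable (fun p : ℝ × ℝ => e p.1 * ((f p.2 : ℂ) * (tker α lam (p.1 - p.2) : ℂ)))
      (volume.prod volume) := by
    have h1 : Integrable (fun p : ℝ × ℝ => ((f p.2 : ℂ) * (tker α lam (p.1 - p.2) : ℂ)))
        (volume.prod volume) := by
      have := hconv.ofReal (𝕜 := ℂ)
      simpa [Complex.ofReal_mul] using this
    exact h1.bdd_mul (c := 1) hecont.aestronglyMeasurable
      (Filter.Eventually.of_forall fun p => le_of_eq (henorm p.1))
  calc ∫ x : ℝ, (↑(∫ η, tker α lam (x - η) * f η) : ℂ) * e x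
      = ∫ x : ℝ, ∫ η : ℝ, e x * ((f η : ℂ) * (tker α lam (x - η) : ℂ)) := by
        congr 1; ext x
        have hcoe : ((∫ η, tker α lam (x - η) * f η : ℝ) : ℂ)
            = ∫ η, ((tker α lam (x - η) * f η : ℝ) : ℂ) := (integral_ofReal (𝕜 := ℂ)).symm
        rw [hcoe, ← integral_mul_const]
        congr 1; ext η
        push_cast; ring
    _ = ∫ η : ℝ, ∫ x : ℝ, e x * ((f η : ℂ) * (tker α lam (x - η) : ℂ)) :=
        integral_integral_swap hF
    _ = ∫ η : ℝ, ((f η : ℂ) * e η) * ∫ t : ℝ, (tker α lam t : ℂ) * e t := by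
        congr 1; ext η
        have hsub : (∫ x : ℝ, e x * ((f η : ℂ) * (tker α lam (x - η) : ℂ)))
            = ∫ x : ℝ, (fun t : ℝ => e (t + η) * ((f η : ℂ) * (tker α lam t : ℂ))) (x - η) := by
          congr 1; ext x
          simp [sub_add_cancel]
        rw [hsub,
          integral_sub_right_eq_self (fun t : ℝ => e (t + η) * ((f η : ℂ) * (tker α lam t : ℂ))) η]
        have hexp : ∀ t : ℝ, e (t + η) = e t * e η := by
          intro t
          simp only [e]
          rw [← Complex.exp_add]
          congr 1
          push_cast; ring
        simp_rw [hexp]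
        rw [show (∫ t : ℝ, e t * e η * ((f η : ℂ) * (tker α lam t : ℂ)))
            = ∫ t : ℝ, ((f η : ℂ) * e η) * ((tker α lam t : ℂ) * e t) from by congr 1; ext t; ring,
          integral_const_mul]
    _ = (∫ t : ℝ, (tker α lam t : ℂ) * e t) * ∫ x : ℝ, (f x : ℂ) * e x := by
        rw [integral_mul_const, mul_comm]

lemma tker_fourier {α lam : ℝ} (hα : 0 < α) (hlam : 0 < lam) (ω : ℝ) :
    ∫ t : ℝ, (tker α lam t : ℂ) * Complex.exp (-Complex.I * ω * t)
      = Complex.Gamma α * ((lam : ℂ) + Complex.I * ω) ^ (-(α:ℂ)) := by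
  have h1 : ∀ t : ℝ, (tker α lam t : ℂ) * Complex.exp (-Complex.I * ω * t)
      = Set.indicator (Set.Ioi 0) (fun t : ℝ =>
          ((t ^ (α-1) * Real.exp (-lam * t) : ℝ) : ℂ) * Complex.exp (-Complex.I * ω * t)) t := by
    intro t
    rw [tker]
    by_cases h : t ∈ Set.Ioi (0:ℝ)
    · rw [Set.indicator_of_mem h, Set.indicator_of_mem h]
    · rw [Set.indicator_of_notMem h, Set.indicator_of_notMem h]
      simp
  simp_rw [h1]
  rw [integral_indicator measurableSet_Ioi]
  have hz : (0:ℝ) < ((lam : ℂ) + Complex.I * ω).re := by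
    simp [Complex.add_re, Complex.mul_re, hlam]
  rw [← claplace_eq hα hz]
  apply setIntegral_congr_fun measurableSet_Ioi
  intro t ht
  have ht' : (0:ℝ) ≤ t := le_of_lt ht
  simp only []
  rw [Complex.ofReal_mul, Complex.ofReal_cpow ht', Complex.ofReal_exp, mul_assoc,
    ← Complex.exp_add]
  have harg : ((-lam * t : ℝ) : ℂ) + -Complex.I * ω * t
      = -((lam:ℂ) + Complex.I * ω) * t := by push_cast; ring
  rw [harg]
  norm_num

theorem fourier_left_tempered_integral (lam α : ℝ) (hlam : 0 < lam) (hα : 0 < α)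
    (f : ℝ → ℝ) (hf : Integrable f) (ω : ℝ) :
    ∫ x : ℝ, (leftTemperedIntegral α lam f x : ℂ) * Complex.exp (-Complex.I * ω * x) =
      ((lam : ℂ) + Complex.I * ω) ^ (-(α : ℂ)) *
        ∫ x : ℝ, (f x : ℂ) * Complex.exp (-Complex.I * ω * x) := by
  simp_rw [leftTemperedIntegral_eq α lam f]
  have hsplit : ∀ x : ℝ, ((1 / Real.Gamma α * ∫ η, tker α lam (x - η) * f η : ℝ) : ℂ) *
        Complex.exp (-Complex.I * ω * x)
      = ((1 / Real.Gamma α : ℝ) : ℂ) * (((∫ η, tker α lam (x - η) * f η : ℝ) : ℂ) *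
        Complex.exp (-Complex.I * ω * x)) := by
    intro x; push_cast; ring
  simp_rw [hsplit]
  rw [integral_const_mul, conv_fourier hα hlam hf ω, tker_fourier hα hlam ω]
  have hΓ : ((1 / Real.Gamma α : ℝ) : ℂ) * Complex.Gamma (α:ℂ) = 1 := by
    rw [Complex.Gamma_ofReal]
    push_cast
    field_simp [(Real.Gamma_pos_of_pos hα).ne']
  rw [show ((1 / Real.Gamma α : ℝ) : ℂ) * (Complex.Gamma (α:ℂ) *
      ((lam : ℂ) + Complex.I * ω) ^ (-(α:ℂ)) * ∫ x : ℝ, (f x : ℂ) * Complex.exp (-Complex.I * ω * x))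
      = (((1 / Real.Gamma α : ℝ) : ℂ) * Complex.Gamma (α:ℂ)) *
        (((lam : ℂ) + Complex.I * ω) ^ (-(α:ℂ)) * ∫ x : ℝ, (f x : ℂ) * Complex.exp (-Complex.I * ω * x))
      from by ring, hΓ, one_mul]
end

section
/- Let λ > 0 and α > 0 and let f, g : ℝ → ℝ be integrable and bounded (so that all integrals below converge absolutely). Then the left and right tempered fractional integrals are adjoint to each other in the L² inner product: ∫_{-∞}^{∞} (I₊^{α,λ} f)(x) g(x) dx = ∫_{-∞}^{∞} f(x) (I₋^{α,λ} g)(x) dx. -/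
open MeasureTheory

/-- Right tempered fractional integral. -/
noncomputable def rightTemperedIntegral (α lam : ℝ) (f : ℝ → ℝ) (x : ℝ) : ℝ :=
  (1 / Real.Gamma α) * ∫ η in Set.Ici x, (η - x) ^ (α - 1) * Real.exp (-lam * (η - x)) * f η

theorem tempered_integrals_adjoint (lam α : ℝ) (hlam : 0 < lam) (hα : 0 < α)
    (f g : ℝ → ℝ) (hf : Integrable f) (hfb : ∃ C, ∀ x, |f x| ≤ C)
    (hg : Integrable g) (hgb : ∃ C, ∀ x, |g x| ≤ C) :
    ∫ x : ℝ, leftTemperedIntegral α lam f x * g x =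
      ∫ x : ℝ, f x * rightTemperedIntegral α lam g x := by
  obtain ⟨Cg, hCg⟩ := hgb
  set K : ℝ → ℝ := Set.indicator (Set.Ici 0)
    (fun t => t ^ (α - 1) * Real.exp (-lam * t)) with hK
  -- the kernel is integrable
  have hKint : Integrable K := by
    rw [hK, integrable_indicator_iff measurableSet_Ici]
    have h1 : IntegrableOn (fun t : ℝ => t ^ (α - 1) * Real.exp (-lam * t)) (Set.Ioi 0) := by
      have h2 := integrableOn_rpow_mul_exp_neg_mul_rpow (p := 1) (s := α - 1) (b := lam)
        (by linarith) zero_lt_one hlam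
      exact h2.congr_fun (fun x hx => by simp only [Real.rpow_one]) measurableSet_Ioi
    rwa [integrableOn_Ici_iff_integrableOn_Ioi]
  -- rewrite the set integrals via the kernel K
  have hKval : ∀ x η : ℝ, η ≤ x →
      K (x - η) = (x - η) ^ (α - 1) * Real.exp (-lam * (x - η)) := by
    intro x η h
    exact Set.indicator_of_mem (by simpa using sub_nonneg.mpr h) _
  have hKval' : ∀ x η : ℝ, ¬ η ≤ x → K (x - η) = 0 := by
    intro x η h
    exact Set.indicator_of_notMem (by simp; linarith [lt_of_not_ge h]) _
  have hleft : ∀ x : ℝ,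
      (∫ η in Set.Iic x, (x - η) ^ (α - 1) * Real.exp (-lam * (x - η)) * f η)
        = ∫ η, f η * K (x - η) := by
    intro x
    rw [← integral_indicator measurableSet_Iic]
    congr 1
    funext η
    by_cases h : η ≤ x
    · rw [Set.indicator_of_mem (Set.mem_Iic.mpr h), hKval x η h]; ring
    · rw [Set.indicator_of_notMem (by simpa using h), hKval' x η h, mul_zero]
  have hright : ∀ x : ℝ,
      (∫ η in Set.Ici x, (η - x) ^ (α - 1) * Real.exp (-lam * (η - x)) * g η)
        = ∫ η, g η * K (η - x) := by
    intro x
    rw [← integral_indicator measurableSet_Ici]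
    congr 1
    funext η
    by_cases h : x ≤ η
    · rw [Set.indicator_of_mem (Set.mem_Ici.mpr h), hKval η x h]; ring
    · rw [Set.indicator_of_notMem (by simpa using h), hKval' η x h, mul_zero]
  -- integrability of the double integrand
  have hconv : Integrable (fun p : ℝ × ℝ =>
      (ContinuousLinearMap.mul ℝ ℝ) (f p.2) (K (p.1 - p.2)))
      (volume.prod volume) :=
    hf.convolution_integrand (ContinuousLinearMap.mul ℝ ℝ) hKint
  have hconv' : Integrable (fun p : ℝ × ℝ => f p.2 * K (p.1 - p.2))
      (volume.prod volume) := by simpa using hconv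
  have hFint : Integrable (fun p : ℝ × ℝ => g p.1 * (f p.2 * K (p.1 - p.2)))
      (volume.prod volume) :=
    hconv'.bdd_mul (c := Cg) (hg.aestronglyMeasurable.comp_fst)
      (Filter.Eventually.of_forall fun p => by simpa [Real.norm_eq_abs] using hCg p.1)
  have hswap := integral_integral_swap (f := fun x η => g x * (f η * K (x - η))) hFint
  -- reduce the two sides to the double integrals and conclude
  have e1 : ∀ x : ℝ, leftTemperedIntegral α lam f x * g x
      = (1 / Real.Gamma α) * ∫ η, g x * (f η * K (x - η)) := by
    intro x
    rw [leftTemperedIntegral, hleft x, integral_const_mul]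
    ring
  have e2 : ∀ y : ℝ, f y * rightTemperedIntegral α lam g y
      = (1 / Real.Gamma α) * ∫ x, g x * (f y * K (x - y)) := by
    intro y
    rw [rightTemperedIntegral, hright y]
    have : (∫ x, g x * (f y * K (x - y))) = f y * ∫ x, g x * K (x - y) := by
      rw [← integral_const_mul]
      congr 1
      funext x
      ring
    rw [this]
    ring
  calc ∫ x : ℝ, leftTemperedIntegral α lam f x * g x
      = ∫ x : ℝ, (1 / Real.Gamma α) * ∫ η, g x * (f η * K (x - η)) := by
        simp only [e1]
    _ = (1 / Real.Gamma α) * ∫ x : ℝ, ∫ η, g x * (f η * K (x - η)) :=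
        integral_const_mul _ _
    _ = (1 / Real.Gamma α) * ∫ η : ℝ, ∫ x, g x * (f η * K (x - η)) := by
        rw [hswap]
    _ = ∫ η : ℝ, (1 / Real.Gamma α) * ∫ x, g x * (f η * K (x - η)) :=
        (integral_const_mul _ _).symm
    _ = ∫ x : ℝ, f x * rightTemperedIntegral α lam g x := by
        simp only [e2]
end

section
/- Let λ > 0 and 0 < α < 1, and let f : ℝ → ℝ be continuous with compact support. Then the left tempered fractional derivative inverts the left tempered fractional integral: for every x ∈ ℝ, D₊^{α,λ}(I₊^{α,λ} f)(x) = f(x). -/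
open MeasureTheory

/-- Left tempered fractional derivative (`0 < α < 1`):
`D₊^{α,λ} g(x) = (e^{−λx}/Γ(1−α)) (d/dx) ∫_{-∞}^x (x−η)^{−α} e^{λη} g(η) dη`. -/
noncomputable def leftTemperedDerivative (α lam : ℝ) (g : ℝ → ℝ) (x : ℝ) : ℝ :=
  (Real.exp (-lam * x) / Real.Gamma (1 - α)) *
    deriv (fun y => ∫ η in Set.Iic y, (y - η) ^ (-α) * Real.exp (lam * η) * g η) x

open Set


lemma beta01 {a b : ℝ} (ha : 0 < a) (hb : 0 < b) :
    ∫ t in (0:ℝ)..1, t ^ (a-1) * (1-t) ^ (b-1)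
      = Real.Gamma a * Real.Gamma b / Real.Gamma (a+b) := by
  have h := Complex.Gamma_mul_Gamma_eq_betaIntegral (s := (a:ℂ)) (t := (b:ℂ))
    (by simpa using ha) (by simpa using hb)
  have hcongr : Complex.betaIntegral a b
      = ((∫ t in (0:ℝ)..1, t ^ (a-1) * (1-t) ^ (b-1) : ℝ) : ℂ) := by
    rw [Complex.betaIntegral, ← intervalIntegral.integral_ofReal]
    refine intervalIntegral.integral_congr fun x hx => ?_
    rw [uIcc_of_le zero_le_one] at hx
    push_cast
    rw [Complex.ofReal_cpow hx.1, Complex.ofReal_cpow (by linarith [hx.2])]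
    push_cast
    ring
  rw [hcongr, Complex.Gamma_ofReal, Complex.Gamma_ofReal, ← Complex.ofReal_add,
    Complex.Gamma_ofReal, ← Complex.ofReal_mul, ← Complex.ofReal_mul] at h
  have := Complex.ofReal_injective h
  have hG : Real.Gamma (a+b) ≠ 0 := (Real.Gamma_pos_of_pos (by linarith)).ne'
  field_simp
  linarith [this]

lemma beta_kernel_integrableOn {a b s y : ℝ} (ha0 : 0 < a) (ha1 : a < 1)
    (hb0 : 0 < b) (hb1 : b < 1) (hsy : s < y) :
    IntegrableOn (fun η => (η - s) ^ (a-1) * (y - η) ^ (b-1)) (Ioo s y) := by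
  set m := (s + y) / 2 with hm
  have hsm : s < m := by rw [hm]; linarith
  have hmy : m < y := by rw [hm]; linarith
  have hmeas : ∀ u v : ℝ, u < v → Ioo u v ⊆ Ioo s y →
      AEStronglyMeasurable (fun η => (η - s) ^ (a-1) * (y - η) ^ (b-1))
        (volume.restrict (Ioo u v)) := by
    intro u v _ hsub
    refine (ContinuousOn.mul ?_ ?_).aestronglyMeasurable measurableSet_Ioo
    · exact (continuousOn_id.sub continuousOn_const).rpow_const
        (fun x hx => Or.inl (by have := (hsub hx).1; exact ne_of_gt (show (0:ℝ) < x - s by linarith)))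
    · exact (continuousOn_const.sub continuousOn_id).rpow_const
        (fun x hx => Or.inl (by have := (hsub hx).2; exact ne_of_gt (show (0:ℝ) < y - x by linarith)))
  have h1 : IntegrableOn (fun η => (η - s) ^ (a-1) * (y - η) ^ (b-1)) (Ioo s m) := by
    have hint : IntegrableOn (fun η => (η - s) ^ (a-1) * (y - m) ^ (b-1)) (Ioo s m) := by
      have : IntervalIntegrable (fun η => (η - s) ^ (a-1)) volume s m := by
        have := (intervalIntegral.intervalIntegrable_rpow' (r := a-1)
          (by linarith) (a := 0) (b := m - s)).comp_sub_right s
        simpa using this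
      rw [intervalIntegrable_iff_integrableOn_Ioo_of_le hsm.le] at this
      exact this.mul_const _
    refine Integrable.mono hint (hmeas s m hsm (Ioo_subset_Ioo le_rfl hmy.le)) ?_
    filter_upwards [ae_restrict_mem measurableSet_Ioo] with η hη
    have h1 : 0 < η - s := by linarith [hη.1]
    have h2 : (0:ℝ) < y - m := by linarith
    have h3 : 0 < y - η := by linarith [hη.2]
    rw [Real.norm_eq_abs, Real.norm_eq_abs, abs_of_nonneg (by positivity),
      abs_of_nonneg (by positivity)]
    exact mul_le_mul_of_nonneg_left
      (Real.rpow_le_rpow_of_nonpos h2 (by linarith [hη.2]) (by linarith))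
      (by positivity)
  have h2 : IntegrableOn (fun η => (η - s) ^ (a-1) * (y - η) ^ (b-1)) (Ico m y) := by
    have hint : IntegrableOn (fun η => (m - s) ^ (a-1) * (y - η) ^ (b-1)) (Ico m y) := by
      have : IntervalIntegrable (fun η => (y - η) ^ (b-1)) volume m y := by
        have := ((intervalIntegral.intervalIntegrable_rpow' (r := b-1)
          (by linarith) (a := 0) (b := y - m)).comp_sub_left y).symm
        simpa using this
      rw [intervalIntegrable_iff_integrableOn_Ico_of_le hmy.le] at this
      exact this.const_mul _
    have hmeas2 : AEStronglyMeasurable (fun η => (η - s) ^ (a-1) * (y - η) ^ (b-1))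
        (volume.restrict (Ico m y)) := by
      refine (ContinuousOn.mul ?_ ?_).aestronglyMeasurable measurableSet_Ico
      · exact (continuousOn_id.sub continuousOn_const).rpow_const
          (fun x hx => Or.inl (by have := hx.1; exact ne_of_gt (show (0:ℝ) < x - s by linarith)))
      · exact (continuousOn_const.sub continuousOn_id).rpow_const
          (fun x hx => Or.inl (by have := hx.2; exact ne_of_gt (show (0:ℝ) < y - x by linarith)))
    refine Integrable.mono hint hmeas2 ?_
    filter_upwards [ae_restrict_mem measurableSet_Ico] with η hη
    have h1 : 0 < η - s := by linarith [hη.1]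
    have h2' : (0:ℝ) < m - s := by linarith
    have h3 : 0 < y - η := by linarith [hη.2]
    rw [Real.norm_eq_abs, Real.norm_eq_abs, abs_of_nonneg (by positivity),
      abs_of_nonneg (by positivity)]
    exact mul_le_mul_of_nonneg_right
      (Real.rpow_le_rpow_of_nonpos h2' (by linarith [hη.1]) (by linarith))
      (by positivity)
  have : Ioo s y ⊆ Ioo s m ∪ Ico m y := by
    intro x hx
    rcases lt_or_ge x m with h | h
    · exact Or.inl ⟨hx.1, h⟩
    · exact Or.inr ⟨h, hx.2⟩
  exact (h1.union h2).mono_set this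

lemma beta_shift {a s y : ℝ} (ha0 : 0 < a) (ha1 : a < 1) (hsy : s < y) :
    ∫ η in s..y, (η - s) ^ (a-1) * (y - η) ^ (-a)
      = Real.Gamma a * Real.Gamma (1-a) := by
  set c := y - s with hc
  have hc0 : 0 < c := by simp [hc]; linarith
  have h1 : ∫ η in s..y, (η - s) ^ (a-1) * (y - η) ^ (-a)
      = ∫ u in (0:ℝ)..c, u ^ (a-1) * (c - u) ^ (-a) := by
    have := intervalIntegral.integral_comp_add_right (a := (0:ℝ)) (b := c)
      (fun η => (η - s) ^ (a-1) * (y - η) ^ (-a)) s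
    rw [zero_add, hc, sub_add_cancel] at this
    rw [← this]
    refine intervalIntegral.integral_congr fun u _ => ?_
    rw [hc]; ring_nf
  have h2 : ∫ u in (0:ℝ)..c, u ^ (a-1) * (c - u) ^ (-a)
      = c • ∫ t in (0:ℝ)..1, (c * t) ^ (a-1) * (c - c * t) ^ (-a) := by
    rw [intervalIntegral.smul_integral_comp_mul_left (fun u => u ^ (a-1) * (c - u) ^ (-a)) c,
      mul_zero, mul_one]
  have h3 : ∫ t in (0:ℝ)..1, (c * t) ^ (a-1) * (c - c * t) ^ (-a)
      = (c ^ (a-1) * c ^ (-a)) * ∫ t in (0:ℝ)..1, t ^ (a-1) * (1-t) ^ (-a) := by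
    rw [← intervalIntegral.integral_const_mul]
    refine intervalIntegral.integral_congr fun t ht => ?_
    rw [uIcc_of_le zero_le_one] at ht
    have h1t : (0:ℝ) ≤ 1 - t := by linarith [ht.2]
    rw [Real.mul_rpow hc0.le ht.1, show c - c * t = c * (1 - t) by ring,
      Real.mul_rpow hc0.le h1t]
    ring
  have hbeta := beta01 ha0 (by linarith : (0:ℝ) < 1 - a)
  rw [h1, h2, h3, smul_eq_mul]
  rw [show (1:ℝ) - a - 1 = -a by ring] at hbeta
  rw [hbeta, show a + (1 - a) = 1 by ring, Real.Gamma_one]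
  rw [← Real.rpow_add hc0, show a - 1 + -a = -1 by ring, Real.rpow_neg_one]
  field_simp

lemma key_fubini (lam α : ℝ) (hα₀ : 0 < α) (hα₁ : α < 1) (f : ℝ → ℝ) (hf : Continuous f)
    (hsupp : HasCompactSupport f) (y : ℝ) :
    ∫ η in Set.Iic y, (y - η) ^ (-α) * Real.exp (lam * η) * leftTemperedIntegral α lam f η
      = Real.Gamma (1-α) * ∫ s in Set.Iic y, Real.exp (lam * s) * f s := by
  have hΓα : Real.Gamma α ≠ 0 := (Real.Gamma_pos_of_pos hα₀).ne'
  set h : ℝ → ℝ := fun s => Real.exp (lam * s) * f s with hh_def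
  have hh : Continuous h := (Real.continuous_exp.comp (continuous_const.mul continuous_id)).mul hf
  have hhsupp : HasCompactSupport h := hsupp.mul_left
  have hhint : Integrable h := hh.integrable_of_hasCompactSupport hhsupp
  set B : ℝ := Real.Gamma α * Real.Gamma (1-α) with hB_def
  set S : Set (ℝ × ℝ) := {p | p.2 < p.1 ∧ p.1 < y} with hS_def
  have hSopen : IsOpen S := (isOpen_lt continuous_snd continuous_fst).and
    (isOpen_lt continuous_fst continuous_const)
  set F : ℝ × ℝ → ℝ := fun p => (p.1 - p.2) ^ (α-1) * (y - p.1) ^ (-α) * h p.2 with hF_def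
  set Φ : ℝ × ℝ → ℝ := S.indicator F with hΦ_def
  -- kernel integrability and value
  have hkerInt : ∀ s, s < y →
      IntegrableOn (fun η => (η - s) ^ (α-1) * (y - η) ^ (-α)) (Ioo s y) := by
    intro s hs
    have := beta_kernel_integrableOn hα₀ hα₁ (show (0:ℝ) < 1-α by linarith)
      (show (1:ℝ)-α < 1 by linarith) hs
    simpa [show (1:ℝ) - α - 1 = -α by ring] using this
  have hkerVal : ∀ s, s < y →
      ∫ η in Ioo s y, (η - s) ^ (α-1) * (y - η) ^ (-α) = B := by
    intro s hs
    rw [← integral_Ioc_eq_integral_Ioo, ← intervalIntegral.integral_of_le hs.le]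
    exact beta_shift hα₀ hα₁ hs
  -- measurability of Φ
  have hFcont : ContinuousOn F S := by
    refine ContinuousOn.mul (ContinuousOn.mul ?_ ?_) (hh.comp continuous_snd).continuousOn
    · exact (continuous_fst.sub continuous_snd).continuousOn.rpow_const
        (fun p hp => Or.inl (by have := hp.1; exact ne_of_gt (sub_pos.2 this)))
    · exact (continuous_const.sub continuous_fst).continuousOn.rpow_const
        (fun p hp => Or.inl (by have := hp.2; exact ne_of_gt (sub_pos.2 this)))
  have hΦmeas : AEStronglyMeasurable Φ (volume.prod volume) :=
    (aestronglyMeasurable_indicator_iff hSopen.measurableSet).2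
      (hFcont.aestronglyMeasurable hSopen.measurableSet)
  -- slices in η
  have hslice : ∀ s, (fun η => Φ (η, s))
      = (Ioo s y).indicator (fun η => (η - s) ^ (α-1) * (y - η) ^ (-α) * h s) := by
    intro s; funext η
    rw [hΦ_def]
    by_cases hmem : η ∈ Ioo s y
    · have hmem' : (η, s) ∈ S := ⟨hmem.1, hmem.2⟩
      rw [Set.indicator_of_mem hmem, Set.indicator_of_mem hmem']
    · have hmem' : (η, s) ∉ S := fun hc => hmem ⟨hc.1, hc.2⟩
      rw [Set.indicator_of_notMem hmem, Set.indicator_of_notMem hmem']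
  -- integrability of Φ
  have hΦint : Integrable Φ (volume.prod volume) := by
    refine (integrable_prod_iff' hΦmeas).2 ⟨Filter.Eventually.of_forall fun s => ?_, ?_⟩
    · rw [hslice s]
      rcases lt_or_ge s y with hs | hs
      · rw [integrable_indicator_iff measurableSet_Ioo]
        exact (hkerInt s hs).mul_const (h s)
      · rw [Set.Ioo_eq_empty (not_lt.2 hs), Set.indicator_empty]
        exact integrable_zero _ _ _
    · have heq : (fun s => ∫ η, ‖Φ (η, s)‖) = (Iio y).indicator (fun s => B * |h s|) := by
        funext s
        have hs' := fun η => congrFun (hslice s) η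
        simp only [hs']
        rcases lt_or_ge s y with hlt | hge
        · rw [Set.indicator_of_mem (mem_Iio.2 hlt)]
          calc ∫ η, ‖(Ioo s y).indicator (fun η => (η - s) ^ (α-1) * (y - η) ^ (-α) * h s) η‖
              = ∫ η, (Ioo s y).indicator
                  (fun η => ‖(η - s) ^ (α-1) * (y - η) ^ (-α) * h s‖) η := by
                simp only [norm_indicator_eq_indicator_norm]
            _ = ∫ η in Ioo s y, ‖(η - s) ^ (α-1) * (y - η) ^ (-α) * h s‖ :=
                integral_indicator measurableSet_Ioo
            _ = ∫ η in Ioo s y, (η - s) ^ (α-1) * (y - η) ^ (-α) * |h s| := by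
                refine setIntegral_congr_fun measurableSet_Ioo fun η hη => ?_
                have h1 : 0 < η - s := by linarith [hη.1]
                have h2 : 0 < y - η := by linarith [hη.2]
                rw [norm_mul, norm_mul, Real.norm_eq_abs, Real.norm_eq_abs, Real.norm_eq_abs,
                  abs_of_nonneg (by positivity), abs_of_nonneg (by positivity)]
            _ = (∫ η in Ioo s y, (η - s) ^ (α-1) * (y - η) ^ (-α)) * |h s| :=
                integral_mul_const _ _
            _ = B * |h s| := by rw [hkerVal s hlt]
        · rw [Set.Ioo_eq_empty (not_lt.2 hge), Set.indicator_of_notMem (by simpa using hge)]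
          simp
      rw [heq]
      exact (hhint.abs.const_mul B).indicator measurableSet_Iio
  -- step A: pointwise rewriting of the integrand
  have stepA : ∀ η, (y - η) ^ (-α) * Real.exp (lam * η) * leftTemperedIntegral α lam f η
      = (1 / Real.Gamma α) *
          ∫ s in Iic η, (η - s) ^ (α-1) * (y - η) ^ (-α) * h s := by
    intro η
    rw [leftTemperedIntegral]
    rw [show (y - η) ^ (-α) * Real.exp (lam * η) *
        ((1 / Real.Gamma α) * ∫ s in Iic η, (η - s) ^ (α - 1) * Real.exp (-lam * (η - s)) * f s)
      = (1 / Real.Gamma α) * ((y - η) ^ (-α) * Real.exp (lam * η) *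
          ∫ s in Iic η, (η - s) ^ (α - 1) * Real.exp (-lam * (η - s)) * f s) from by ring]
    congr 1
    rw [← integral_const_mul]
    refine integral_congr_ae (Filter.Eventually.of_forall fun s => ?_)
    have hexp : Real.exp (lam * η) * Real.exp (-lam * (η - s)) = Real.exp (lam * s) := by
      rw [← Real.exp_add]; ring_nf
    calc (y - η) ^ (-α) * Real.exp (lam * η) *
          ((η - s) ^ (α - 1) * Real.exp (-lam * (η - s)) * f s)
        = (η - s) ^ (α-1) * (y - η) ^ (-α) *
            ((Real.exp (lam * η) * Real.exp (-lam * (η - s))) * f s) := by ring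
      _ = (η - s) ^ (α-1) * (y - η) ^ (-α) * (Real.exp (lam * s) * f s) := by rw [hexp]
  -- step B: inner integral = full integral of Φ slice
  have stepB : ∀ η ∈ Iic y,
      (∫ s in Iic η, (η - s) ^ (α-1) * (y - η) ^ (-α) * h s) = ∫ s, Φ (η, s) := by
    intro η hη
    by_cases hηy : η < y
    · have hs' : ∀ s, Φ (η, s)
          = (Iio η).indicator (fun s => (η - s) ^ (α-1) * (y - η) ^ (-α) * h s) s := by
        intro s
        rw [hΦ_def]
        by_cases hmem : s < η
        · have hmem' : (η, s) ∈ S := ⟨hmem, hηy⟩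
          rw [Set.indicator_of_mem hmem', Set.indicator_of_mem (mem_Iio.2 hmem)]
        · have hmem' : (η, s) ∉ S := fun hc => hmem hc.1
          rw [Set.indicator_of_notMem hmem', Set.indicator_of_notMem (by simpa using hmem)]
      simp only [hs']
      rw [integral_indicator measurableSet_Iio]
      exact (setIntegral_congr_set Iio_ae_eq_Iic).symm
    · have hηy' : η = y := le_antisymm hη (not_lt.1 hηy)
      subst hηy'
      have : ∀ s : ℝ, Φ (η, s) = 0 := by
        intro s
        rw [hΦ_def]
        exact Set.indicator_of_notMem (fun hc => absurd hc.2 (lt_irrefl η)) _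
      simp only [this, integral_zero, sub_self, Real.zero_rpow (by linarith : -α ≠ 0)]
      simp
  -- step C : outer integrand vanishes off Iic y
  have stepC : ∀ η, η ∉ Iic y → (∫ s, Φ (η, s)) = 0 := by
    intro η hη
    have hyη : y < η := not_le.1 (by simpa using hη)
    have : ∀ s : ℝ, Φ (η, s) = 0 := fun s => by
      rw [hΦ_def]
      exact Set.indicator_of_notMem (fun hc => absurd hc.2 (by linarith)) _
    simp [this]
  -- step D : inner integral over η
  have stepD : ∀ s, (∫ η, Φ (η, s)) = (Iio y).indicator (fun s => B * h s) s := by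
    intro s
    have hs' := fun η => congrFun (hslice s) η
    simp only [hs']
    rcases lt_or_ge s y with hlt | hge
    · rw [Set.indicator_of_mem (mem_Iio.2 hlt), integral_indicator measurableSet_Ioo,
        integral_mul_const, hkerVal s hlt, mul_comm]
    · rw [Set.Ioo_eq_empty (not_lt.2 hge), Set.indicator_of_notMem (by simpa using hge)]
      simp
  -- put it together
  calc ∫ η in Iic y, (y - η) ^ (-α) * Real.exp (lam * η) * leftTemperedIntegral α lam f η
      = ∫ η in Iic y, (1 / Real.Gamma α) *
          ∫ s in Iic η, (η - s) ^ (α-1) * (y - η) ^ (-α) * h s :=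
        setIntegral_congr_fun measurableSet_Iic fun η _ => stepA η
    _ = (1 / Real.Gamma α) * ∫ η in Iic y,
          ∫ s in Iic η, (η - s) ^ (α-1) * (y - η) ^ (-α) * h s := integral_const_mul _ _
    _ = (1 / Real.Gamma α) * ∫ η in Iic y, ∫ s, Φ (η, s) := by
        congr 1; exact setIntegral_congr_fun measurableSet_Iic stepB
    _ = (1 / Real.Gamma α) * ∫ η, ∫ s, Φ (η, s) := by
        congr 1; exact setIntegral_eq_integral_of_forall_compl_eq_zero stepC
    _ = (1 / Real.Gamma α) * ∫ s, ∫ η, Φ (η, s) := by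
        congr 1
        exact integral_integral_swap (f := fun η s => Φ (η, s)) hΦint
    _ = (1 / Real.Gamma α) * ∫ s, (Iio y).indicator (fun s => B * h s) s := by
        congr 1; exact integral_congr_ae (Filter.Eventually.of_forall stepD)
    _ = (1 / Real.Gamma α) * ∫ s in Iio y, B * h s := by
        rw [integral_indicator measurableSet_Iio]
    _ = (1 / Real.Gamma α) * (B * ∫ s in Iio y, h s) := by rw [integral_const_mul]
    _ = Real.Gamma (1-α) * ∫ s in Iic y, h s := by
        rw [setIntegral_congr_set Iio_ae_eq_Iic, hB_def]
        field_simp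

theorem left_tempered_derivative_inverts_integral (lam α : ℝ) (hlam : 0 < lam)
    (hα₀ : 0 < α) (hα₁ : α < 1) (f : ℝ → ℝ) (hf : Continuous f)
    (hsupp : HasCompactSupport f) :
    ∀ x : ℝ, leftTemperedDerivative α lam (leftTemperedIntegral α lam f) x = f x := by
  intro x
  have hG : Real.Gamma (1-α) ≠ 0 := (Real.Gamma_pos_of_pos (by linarith)).ne'
  set h : ℝ → ℝ := fun s => Real.exp (lam * s) * f s with hh_def
  have hh : Continuous h := (Real.continuous_exp.comp (continuous_const.mul continuous_id)).mul hf
  have hhsupp : HasCompactSupport h := hsupp.mul_left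
  have hhint : Integrable h := hh.integrable_of_hasCompactSupport hhsupp
  have hkey : (fun y => ∫ η in Set.Iic y,
        (y - η) ^ (-α) * Real.exp (lam * η) * leftTemperedIntegral α lam f η)
      = fun y => Real.Gamma (1-α) * ((∫ s in x..y, h s) + ∫ s in Set.Iic x, h s) := by
    funext y
    rw [key_fubini lam α hα₀ hα₁ f hf hsupp y]
    congr 1
    rw [← intervalIntegral.integral_Iic_sub_Iic hhint.integrableOn hhint.integrableOn]
    ring
  have hD : HasDerivAt (fun y => Real.Gamma (1-α) * ((∫ s in x..y, h s) + ∫ s in Set.Iic x, h s))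
      (Real.Gamma (1-α) * h x) x :=
    (((hh.integral_hasStrictDerivAt x x).hasDerivAt).add_const _).const_mul _
  rw [leftTemperedDerivative, hkey, hD.deriv]
  rw [hh_def]
  have hexp : Real.exp (-(lam * x)) * Real.exp (lam * x) = 1 := by
    rw [← Real.exp_add]; ring_nf; exact Real.exp_zero
  field_simp
  linear_combination (f x) * hexp
end

section
/- The rational function r(z) = (1 + (5/12)z)/((1 − z/4)(1 − z/3)) is a second-order accurate approximation to the exponential near zero: there exists a constant C > 0 such that for all complex z with |z| ≤ 1, |e^{z} − r(z)| ≤ C|z|³. -/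
/-- The RDP rational approximation to the exponential. -/
noncomputable def rdp (z : ℂ) : ℂ := (1 + (5 / 12) * z) / ((1 - z / 4) * (1 - z / 3))

theorem rdp_second_order_accurate :
    ∃ C : ℝ, 0 < C ∧ ∀ z : ℂ, ‖z‖ ≤ 1 →
      ‖Complex.exp z - rdp z‖ ≤ C * ‖z‖ ^ 3 := by
  refine ⟨2, by norm_num, fun z hz => ?_⟩
  set az := ‖z‖ with haz
  have haz0 : 0 ≤ az := norm_nonneg z
  -- denominator factors are nonzero
  have h4 : ‖1 - z / 4‖ ≥ 3 / 4 := by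
    have h := norm_sub_norm_le 1 (z / 4)
    have : ‖z / 4‖ ≤ 1 / 4 := by
      rw [norm_div, show ‖(4:ℂ)‖ = 4 by norm_num]
      rw [haz] at hz; linarith
    simp only [norm_one] at h
    linarith
  have h3 : ‖1 - z / 3‖ ≥ 2 / 3 := by
    have h := norm_sub_norm_le 1 (z / 3)
    have : ‖z / 3‖ ≤ 1 / 3 := by
      rw [norm_div, show ‖(3:ℂ)‖ = 3 by norm_num]
      rw [haz] at hz; linarith
    simp only [norm_one] at h
    linarith
  have h4ne : (1 - z / 4) ≠ 0 := by
    intro h; rw [h] at h4; simp at h4; linarith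
  have h3ne : (1 - z / 3) ≠ 0 := by
    intro h; rw [h] at h3; simp at h3; linarith
  have hd : ‖(1 - z / 4) * (1 - z / 3)‖ ≥ 1 / 2 := by
    rw [norm_mul]
    calc (1:ℝ)/2 = (3/4) * (2/3) := by norm_num
    _ ≤ ‖1 - z / 4‖ * ‖1 - z / 3‖ :=
        mul_le_mul h4 h3 (by norm_num) (le_trans (by norm_num) h4)
  -- Taylor bound for exp
  have hexp := Complex.exp_bound hz (n := 3) (by norm_num)
  have hsum : ∑ m ∈ Finset.range 3, z ^ m / m.factorial = 1 + z + z ^ 2 / 2 := by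
    simp [Finset.sum_range_succ]
  rw [hsum] at hexp
  have hexp' : ‖Complex.exp z - (1 + z + z ^ 2 / 2)‖ ≤ az ^ 3 * (2 / 9) := by
    calc ‖Complex.exp z - (1 + z + z ^ 2 / 2)‖
        ≤ az ^ 3 * ((4 : ℝ) * ((6 : ℝ) * 3)⁻¹) := by
          convert hexp using 2 <;> norm_num
    _ = az ^ 3 * (2 / 9) := by norm_num
  -- key algebraic identity
  have key : Complex.exp z - rdp z =
      ((Complex.exp z - (1 + z + z ^ 2 / 2)) * (1 - 7 / 12 * z + 1 / 12 * z ^ 2)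
        + (-(5 / 24) * z ^ 3 + 1 / 24 * z ^ 4)) / ((1 - z / 4) * (1 - z / 3)) := by
    have hdne : (1 - z / 4) * (1 - z / 3) ≠ 0 := mul_ne_zero h4ne h3ne
    rw [rdp, eq_div_iff hdne, sub_mul, div_mul_cancel₀ _ hdne]
    ring
  rw [key, norm_div]
  -- bound q
  have hq : ‖1 - 7 / 12 * z + 1 / 12 * z ^ 2‖ ≤ 5 / 3 := by
    calc ‖1 - 7 / 12 * z + 1 / 12 * z ^ 2‖
        ≤ ‖1 - 7 / 12 * z‖ + ‖1 / 12 * z ^ 2‖ :=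
          norm_add_le _ _
    _ ≤ (‖(1:ℂ)‖ + ‖7 / 12 * z‖) + ‖1 / 12 * z ^ 2‖ := by
          gcongr
          exact norm_sub_le _ _
    _ = 1 + 7 / 12 * az + 1 / 12 * az ^ 2 := by
          rw [norm_one, norm_mul, norm_mul, norm_pow]
          norm_num
          rfl
    _ ≤ 5 / 3 := by
          have h2 : az ^ 2 ≤ 1 := pow_le_one₀ haz0 hz
          linarith
  have hz4 : az ^ 4 ≤ az ^ 3 := pow_le_pow_of_le_one haz0 hz (by norm_num)
  -- bound numerator
  have hnum : ‖(Complex.exp z - (1 + z + z ^ 2 / 2)) * (1 - 7 / 12 * z + 1 / 12 * z ^ 2)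
        + (-(5 / 24) * z ^ 3 + 1 / 24 * z ^ 4)‖ ≤ 1 * az ^ 3 := by
    calc ‖(Complex.exp z - (1 + z + z ^ 2 / 2)) * (1 - 7 / 12 * z + 1 / 12 * z ^ 2)
        + (-(5 / 24) * z ^ 3 + 1 / 24 * z ^ 4)‖
        ≤ ‖(Complex.exp z - (1 + z + z ^ 2 / 2)) * (1 - 7 / 12 * z + 1 / 12 * z ^ 2)‖
          + (‖-(5 / 24) * z ^ 3‖ + ‖1 / 24 * z ^ 4‖) := by
          refine le_trans (norm_add_le _ _) ?_
          gcongr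
          exact norm_add_le _ _
    _ ≤ az ^ 3 * (2 / 9) * (5 / 3) + (5 / 24 * az ^ 3 + 1 / 24 * az ^ 4) := by
          have c1 : ‖-(5 / 24 : ℂ)‖ = 5 / 24 := by
            rw [norm_neg]; norm_num [norm_div]
          have c2 : ‖(1 : ℂ) / 24‖ = 1 / 24 := by
            norm_num [norm_div]
          rw [norm_mul, norm_mul, norm_mul, norm_pow, norm_pow, c1, c2]
          exact add_le_add (mul_le_mul hexp' hq (norm_nonneg _) (by positivity)) le_rfl
    _ ≤ az ^ 3 * (2 / 9) * (5 / 3) + (5 / 24 * az ^ 3 + 1 / 24 * az ^ 3) := by gcongr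
    _ = (67 / 108) * az ^ 3 := by ring
    _ ≤ 1 * az ^ 3 := by gcongr <;> norm_num
  calc ‖(Complex.exp z - (1 + z + z ^ 2 / 2)) * (1 - 7 / 12 * z + 1 / 12 * z ^ 2)
        + (-(5 / 24) * z ^ 3 + 1 / 24 * z ^ 4)‖ / ‖(1 - z / 4) * (1 - z / 3)‖
      ≤ (1 * az ^ 3) / (1 / 2) :=
        div_le_div₀ (by positivity) hnum (by norm_num) hd
    _ = 2 * az ^ 3 := by ring
end

section
/- The rational function r(z) = (1 + (5/12)z)/((1 − z/4)(1 − z/3)) is L-acceptable: (i) for every complex number z with Re(z) ≤ 0 one has |r(z)| ≤ 1, and (ii) r(x) → 0 as the real number x → −∞. -/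
theorem rdp_L_acceptable :
    (∀ z : ℂ, z.re ≤ 0 → ‖rdp z‖ ≤ 1) ∧
    Filter.Tendsto (fun x : ℝ => rdp (x : ℂ)) Filter.atBot (nhds 0) := by
  constructor
  · intro z hz
    unfold rdp
    rw [norm_div]
    apply div_le_one_of_le₀
    · have hnum : Complex.normSq (1 + (5 / 12) * z)
          = (1 + 5/12*z.re)^2 + (5/12*z.im)^2 := by
        simp [Complex.normSq_apply, Complex.mul_re, Complex.mul_im, Complex.re_ofNat,
          Complex.im_ofNat, Complex.div_re, Complex.div_im, Complex.normSq_ofNat]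
        ring
      have hden : Complex.normSq ((1 - z / 4) * (1 - z / 3))
          = ((1 - z.re/4)^2 + (z.im/4)^2) * ((1 - z.re/3)^2 + (z.im/3)^2) := by
        simp [Complex.normSq_apply, Complex.mul_re, Complex.mul_im, Complex.sub_re,
          Complex.sub_im, Complex.re_ofNat, Complex.im_ofNat, Complex.div_re,
          Complex.div_im, Complex.normSq_ofNat]
        ring
      have key : Complex.normSq (1 + (5 / 12) * z) ≤
          Complex.normSq ((1 - z / 4) * (1 - z / 3)) := by
        rw [hnum, hden]
        set x := z.re
        set y := z.im
        nlinarith [sq_nonneg y, sq_nonneg (y*y), mul_nonneg (neg_nonneg.2 hz) (sq_nonneg y),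
          mul_nonneg (mul_nonneg (neg_nonneg.2 hz) (neg_nonneg.2 hz)) (sq_nonneg y),
          mul_nonneg (neg_nonneg.2 hz) (sq_nonneg x),
          mul_nonneg (mul_nonneg (neg_nonneg.2 hz) (neg_nonneg.2 hz)) (sq_nonneg x)]
      rw [Complex.norm_def, Complex.norm_def]
      exact Real.sqrt_le_sqrt key
    · exact norm_nonneg _
  · have hinv : Filter.Tendsto (fun x : ℝ => ((x : ℂ))⁻¹) Filter.atBot (nhds 0) := by
      have h1 : Filter.Tendsto (fun x : ℝ => x⁻¹) Filter.atBot (nhds 0) := by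
        have hneg : Filter.Tendsto (fun x : ℝ => -x) Filter.atBot Filter.atTop :=
          Filter.tendsto_neg_atBot_atTop
        have hi : Filter.Tendsto (fun r : ℝ => r⁻¹) Filter.atTop (nhds 0) :=
          tendsto_inv_atTop_zero
        have := (hi.comp hneg).neg
        simpa [Function.comp_def, inv_neg] using this
      have := (Complex.continuous_ofReal.tendsto 0).comp h1
      simpa [Function.comp_def, Complex.ofReal_inv] using this
    have hT : Filter.Tendsto
        (fun x : ℝ => (((x:ℂ))⁻¹ * (((x:ℂ))⁻¹ + 5 / 12)) /
          ((((x:ℂ))⁻¹ - 1 / 4) * (((x:ℂ))⁻¹ - 1 / 3)))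
        Filter.atBot (nhds 0) := by
      have hnum : Filter.Tendsto (fun x : ℝ => ((x:ℂ))⁻¹ * (((x:ℂ))⁻¹ + 5 / 12))
          Filter.atBot (nhds ((0:ℂ) * (0 + 5 / 12))) :=
        hinv.mul (hinv.add tendsto_const_nhds)
      have hden : Filter.Tendsto (fun x : ℝ => (((x:ℂ))⁻¹ - 1 / 4) * (((x:ℂ))⁻¹ - 1 / 3))
          Filter.atBot (nhds (((0:ℂ) - 1 / 4) * (0 - 1 / 3))) :=
        (hinv.sub tendsto_const_nhds).mul (hinv.sub tendsto_const_nhds)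
      have := hnum.div hden (by norm_num)
      simpa [Pi.div_def] using this
    refine hT.congr' ?_
    filter_upwards [Filter.eventually_lt_atBot (0:ℝ)] with x hx
    have hx0 : (x:ℂ) ≠ 0 := by exact_mod_cast ne_of_lt hx
    have h4 : (1 : ℂ) - (x:ℂ)/4 ≠ 0 := by
      have : ((1 - x/4 : ℝ) : ℂ) = 1 - (x:ℂ)/4 := by push_cast; ring
      rw [← this, Complex.ofReal_ne_zero]
      nlinarith
    have h3 : (1 : ℂ) - (x:ℂ)/3 ≠ 0 := by
      have : ((1 - x/3 : ℝ) : ℂ) = 1 - (x:ℂ)/3 := by push_cast; ring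
      rw [← this, Complex.ofReal_ne_zero]
      nlinarith
    have hxinv : ((x:ℂ))⁻¹ ≠ 0 := inv_ne_zero hx0
    have e4 : ((x:ℂ))⁻¹ - 1/4 = (1 - (x:ℂ)/4) * ((x:ℂ))⁻¹ := by
      field_simp
    have e3 : ((x:ℂ))⁻¹ - 1/3 = (1 - (x:ℂ)/3) * ((x:ℂ))⁻¹ := by
      field_simp
    rw [rdp, div_eq_div_iff (by rw [e4, e3]; exact mul_ne_zero (mul_ne_zero h4 hxinv) (mul_ne_zero h3 hxinv)) (mul_ne_zero h4 h3)]
    field_simp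
end
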